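/- arXiv:1902.05716 — 4 statements merged into one kernel-verified Lean document; each statement's English description precedes it below -/
import Mathlib

section
/- Let L > 0, T > 0, g ∈ ℝ, and let u : [0,T] × [−L,L] → ℂ be twice continuously differentiable and satisfy i ∂_t u(t,x) = −(1/2) ∂_xx u(t,x) + g |u(t,x)|² u(t,x) on [0,T] × [−L,L], with u(t,−L) = u(t,L) = 0 and additionally ∂_x u(t,−L) = ∂_x u(t,L) = 0 for all t ∈ [0,T]. Then the impulse functional P(t) = ∫_{−L}^{L} conj(u(t,x)) · (−i) ∂_x u(t,x) dx is constant in t, i.e. P(t) = P(0) for all t ∈ [0,T]. -/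
open MeasureTheory intervalIntegral Complex

noncomputable section GPEaux

variable (u : ℝ → ℝ → ℂ)

def pf (u : ℝ → ℝ → ℂ) : ℝ × ℝ → ℂ := fun p => u p.1 p.2
def pd1 (u : ℝ → ℝ → ℂ) (p : ℝ × ℝ) : ℂ := fderiv ℝ (pf u) p (1, 0)
def pd2 (u : ℝ → ℝ → ℂ) (p : ℝ × ℝ) : ℂ := fderiv ℝ (pf u) p (0, 1)
def pd21 (u : ℝ → ℝ → ℂ) (p : ℝ × ℝ) : ℂ := fderiv ℝ (pd2 u) p (1, 0)
def pd22 (u : ℝ → ℝ → ℂ) (p : ℝ × ℝ) : ℂ := fderiv ℝ (pd2 u) p (0, 1)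

variable (hreg : ContDiff ℝ 2 (pf u))

theorem hc_u (hreg : ContDiff ℝ 2 (pf u)) : Continuous (pf u) := hreg.continuous

theorem hcd1 (hreg : ContDiff ℝ 2 (pf u)) : ContDiff ℝ 1 (pd1 u) :=
  (hreg.fderiv_right (by norm_num)).clm_apply contDiff_const

theorem hcd2 (hreg : ContDiff ℝ 2 (pf u)) : ContDiff ℝ 1 (pd2 u) :=
  (hreg.fderiv_right (by norm_num)).clm_apply contDiff_const

theorem hc_d21 (hreg : ContDiff ℝ 2 (pf u)) : Continuous (pd21 u) := by
  have := ((hcd2 u hreg).continuous_fderiv (by simp))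
  exact this.clm_apply continuous_const

theorem hc_d22 (hreg : ContDiff ℝ 2 (pf u)) : Continuous (pd22 u) := by
  have := ((hcd2 u hreg).continuous_fderiv (by simp))
  exact this.clm_apply continuous_const

-- slice derivative lemmas
theorem key_t (hreg : ContDiff ℝ 2 (pf u)) (t x : ℝ) :
    HasDerivAt (fun s => u s x) (pd1 u (t, x)) t := by
  have h1 : HasDerivAt (fun s : ℝ => (s, x)) ((1 : ℝ), (0 : ℝ)) t :=
    HasDerivAt.prodMk (hasDerivAt_id t) (hasDerivAt_const t x)
  exact ((hreg.differentiable (by simp)) (t, x)).hasFDerivAt.comp_hasDerivAt t h1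

theorem key_x (hreg : ContDiff ℝ 2 (pf u)) (t x : ℝ) :
    HasDerivAt (fun y => u t y) (pd2 u (t, x)) x := by
  have h1 : HasDerivAt (fun y : ℝ => (t, y)) ((0 : ℝ), (1 : ℝ)) x :=
    HasDerivAt.prodMk (hasDerivAt_const x t) (hasDerivAt_id x)
  exact ((hreg.differentiable (by simp)) (t, x)).hasFDerivAt.comp_hasDerivAt x h1

theorem deriv_x (hreg : ContDiff ℝ 2 (pf u)) (t x : ℝ) :
    deriv (fun y => u t y) x = pd2 u (t, x) := (key_x u hreg t x).deriv

theorem key_xt (hreg : ContDiff ℝ 2 (pf u)) (t x : ℝ) :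
    HasDerivAt (fun s => pd2 u (s, x)) (pd21 u (t, x)) t := by
  have h1 : HasDerivAt (fun s : ℝ => (s, x)) ((1 : ℝ), (0 : ℝ)) t :=
    HasDerivAt.prodMk (hasDerivAt_id t) (hasDerivAt_const t x)
  exact (((hcd2 u hreg).differentiable (by simp)) (t, x)).hasFDerivAt.comp_hasDerivAt t h1

theorem key_xx (hreg : ContDiff ℝ 2 (pf u)) (t x : ℝ) :
    HasDerivAt (fun y => pd2 u (t, y)) (pd22 u (t, x)) x := by
  have h1 : HasDerivAt (fun y : ℝ => (t, y)) ((0 : ℝ), (1 : ℝ)) x :=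
    HasDerivAt.prodMk (hasDerivAt_const x t) (hasDerivAt_id x)
  exact (((hcd2 u hreg).differentiable (by simp)) (t, x)).hasFDerivAt.comp_hasDerivAt x h1

theorem deriv_xx (hreg : ContDiff ℝ 2 (pf u)) (t x : ℝ) :
    deriv (deriv (fun y => u t y)) x = pd22 u (t, x) := by
  have : deriv (fun y => u t y) = fun y => pd2 u (t, y) := funext fun y => deriv_x u hreg t y
  rw [this]
  exact (key_xx u hreg t x).deriv


-- redeclare for test (will merge)

theorem key_tx (u : ℝ → ℝ → ℂ) (hreg : ContDiff ℝ 2 (pf u)) (t x : ℝ) :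
    HasDerivAt (fun y => pd1 u (t, y)) (pd21 u (t, x)) x := by
  have hdf : ∀ p, HasFDerivAt (pf u) (fderiv ℝ (pf u) p) p := fun p =>
    ((hreg.differentiable (by simp)) p).hasFDerivAt
  have hdf' : Differentiable ℝ (fderiv ℝ (pf u)) :=
    (hreg.fderiv_right (m := 1) (by norm_num)).differentiable (by simp)
  set p : ℝ × ℝ := (t, x) with hp
  have hsymm := second_derivative_symmetric hdf (hdf' p).hasFDerivAt
  -- pd1 as composition
  have h1 : HasFDerivAt (pd1 u)
      ((ContinuousLinearMap.apply ℝ ℂ ((1:ℝ),(0:ℝ))).comp (fderiv ℝ (fderiv ℝ (pf u)) p)) p :=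
    (ContinuousLinearMap.apply ℝ ℂ ((1:ℝ),(0:ℝ))).hasFDerivAt.comp p (hdf' p).hasFDerivAt
  have h2 : HasFDerivAt (pd2 u)
      ((ContinuousLinearMap.apply ℝ ℂ ((0:ℝ),(1:ℝ))).comp (fderiv ℝ (fderiv ℝ (pf u)) p)) p :=
    (ContinuousLinearMap.apply ℝ ℂ ((0:ℝ),(1:ℝ))).hasFDerivAt.comp p (hdf' p).hasFDerivAt
  have hline : HasDerivAt (fun y : ℝ => (t, y)) ((0 : ℝ), (1 : ℝ)) x :=
    HasDerivAt.prodMk (hasDerivAt_const x t) (hasDerivAt_id x)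
  have h3 := h1.comp_hasDerivAt x hline
  have : pd21 u p = ((ContinuousLinearMap.apply ℝ ℂ ((1:ℝ),(0:ℝ))).comp
      (fderiv ℝ (fderiv ℝ (pf u)) p)) ((0:ℝ),(1:ℝ)) := by
    rw [pd21, h2.fderiv]
    exact (hsymm _ _).symm
  rw [this]
  exact h3
theorem inner_zero (L g : ℝ) (hL : 0 < L) (u : ℝ → ℝ → ℂ) (hreg : ContDiff ℝ 2 (pf u)) (s : ℝ)
    (hpde' : ∀ x ∈ Set.Icc (-L) L,
      Complex.I * pd1 u (s, x)
        = -(1/2 : ℂ) * pd22 u (s, x) + (g : ℂ) * (star (u s x) * u s x) * u s x)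
    (hb1 : u s (-L) = 0) (hb2 : u s L = 0)
    (hbx1 : pd2 u (s, -L) = 0) (hbx2 : pd2 u (s, L) = 0) :
    (∫ x in (-L)..L,
      (star (pd1 u (s, x)) * (-Complex.I * pd2 u (s, x))
        + star (u s x) * (-Complex.I * pd21 u (s, x)))) = 0 := by
  have hLL : (-L : ℝ) ≤ L := by linarith
  -- continuity helpers
  have csl : ∀ F : ℝ × ℝ → ℂ, Continuous F → Continuous fun x : ℝ => F (s, x) := fun F hF =>
    hF.comp (continuous_const.prodMk continuous_id)
  have cu : Continuous fun x => u s x := csl _ (hc_u u hreg)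
  have cd1 : Continuous fun x => pd1 u (s, x) := csl _ ((hcd1 u hreg).continuous)
  have cd2 : Continuous fun x => pd2 u (s, x) := csl _ ((hcd2 u hreg).continuous)
  have cd21 : Continuous fun x => pd21 u (s, x) := csl _ (hc_d21 u hreg)
  have cd22 : Continuous fun x => pd22 u (s, x) := csl _ (hc_d22 u hreg)
  -- integration by parts for the second summand
  have hA : ∀ x : ℝ, HasDerivAt (fun y => star (u s y) * (-Complex.I))
      (star (pd2 u (s, x)) * (-Complex.I)) x := fun x =>
    ((key_x u hreg s x).star).mul_const _
  have hB : ∀ x : ℝ, HasDerivAt (fun y => pd1 u (s, y)) (pd21 u (s, x)) x := fun x =>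
    key_tx u hreg s x
  have parts := intervalIntegral.integral_mul_deriv_eq_deriv_mul (a := -L) (b := L)
    (fun x _ => hA x) (fun x _ => hB x)
    ((cd2.star.mul continuous_const).intervalIntegrable _ _)
    (cd21.intervalIntegrable _ _)
  rw [hb1, hb2] at parts
  simp only [star_zero, zero_mul, mul_zero, zero_sub, sub_zero] at parts
  -- split the integral
  have hint1 : IntervalIntegrable (fun x => star (pd1 u (s, x)) * (-Complex.I * pd2 u (s, x)))
      MeasureTheory.volume (-L) L :=
    (cd1.star.mul (continuous_const.mul cd2)).intervalIntegrable _ _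
  have hint2 : IntervalIntegrable (fun x => star (u s x) * (-Complex.I * pd21 u (s, x)))
      MeasureTheory.volume (-L) L :=
    (cu.star.mul (continuous_const.mul cd21)).intervalIntegrable _ _
  rw [intervalIntegral.integral_add hint1 hint2]
  have e2 : (∫ x in (-L)..L, star (u s x) * (-Complex.I * pd21 u (s, x)))
      = - ∫ x in (-L)..L, (star (pd2 u (s, x)) * (-Complex.I)) * pd1 u (s, x) := by
    rw [← parts]
    congr 1; ext x; ring
  rw [e2, ← sub_eq_add_neg, ← intervalIntegral.integral_sub
    (g := fun x => star (pd2 u (s, x)) * (-Complex.I) * pd1 u (s, x)) hint1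
    (((cd2.star.mul continuous_const).mul cd1).intervalIntegrable _ _)]
  -- the integrand is an exact derivative on [-L, L]
  set G : ℝ → ℂ := fun x => -(1/2 : ℂ) * (star (pd2 u (s, x)) * pd2 u (s, x))
      + ((g : ℂ)/2) * ((star (u s x) * u s x) * (star (u s x) * u s x)) with hGdef
  set G' : ℝ → ℂ := fun x =>
      -(1/2 : ℂ) * (star (pd22 u (s, x)) * pd2 u (s, x) + star (pd2 u (s, x)) * pd22 u (s, x))
      + ((g : ℂ)/2) * (2 * (star (u s x) * u s x) *
          (star (pd2 u (s, x)) * u s x + star (u s x) * pd2 u (s, x))) with hG'def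
  have hGd : ∀ x : ℝ, HasDerivAt G (G' x) x := by
    intro x
    have h2 := key_x u hreg s x
    have h3 := key_xx u hreg s x
    have hq : HasDerivAt (fun y => star (u s y) * u s y)
        (star (pd2 u (s, x)) * u s x + star (u s x) * pd2 u (s, x)) x :=
      (h2.star).mul h2
    have first : HasDerivAt (fun y => star (pd2 u (s, y)) * pd2 u (s, y))
        (star (pd22 u (s, x)) * pd2 u (s, x) + star (pd2 u (s, x)) * pd22 u (s, x)) x :=
      (h3.star).mul h3
    have hpow : HasDerivAt (fun y => (star (u s y) * u s y) * (star (u s y) * u s y))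
        (2 * (star (u s x) * u s x) *
          (star (pd2 u (s, x)) * u s x + star (u s x) * pd2 u (s, x))) x := by
      have h := hq.mul hq
      exact h.congr_deriv (by ring)
    exact (first.const_mul (-(1/2 : ℂ))).add (hpow.const_mul ((g : ℂ)/2))
  have congrG : ∀ x ∈ Set.uIcc (-L) L,
      star (pd1 u (s, x)) * (-Complex.I * pd2 u (s, x))
        - (star (pd2 u (s, x)) * (-Complex.I)) * pd1 u (s, x) = G' x := by
    intro x hx
    rw [Set.uIcc_of_le hLL] at hx
    have hx' := hpde' x hx
    have ha : pd1 u (s, x)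
        = -Complex.I * (-(1/2 : ℂ) * pd22 u (s, x)
            + (g : ℂ) * (star (u s x) * u s x) * u s x) := by
      linear_combination (-Complex.I) * hx' + (pd1 u (s, x)) * Complex.I_sq
    have hsa : star (pd1 u (s, x))
        = Complex.I * (-(1/2 : ℂ) * star (pd22 u (s, x))
            + (g : ℂ) * (star (u s x) * u s x) * star (u s x)) := by
      rw [ha]
      simp only [star_mul', star_add, star_neg, star_mul, star_div₀, star_one, star_ofNat,
        Complex.star_def, Complex.conj_I, Complex.conj_ofReal, Complex.conj_conj]
      ring
    rw [hsa, ha]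
    simp only [hG'def]
    ring_nf
    simp only [Complex.I_sq]
    ring
  rw [intervalIntegral.integral_congr congrG,
    intervalIntegral.integral_eq_sub_of_hasDerivAt (fun x _ => hGd x)
      (by
        apply Continuous.intervalIntegrable
        rw [hG'def]
        fun_prop)]
  rw [hGdef]
  simp [hb1, hb2, hbx1, hbx2]

theorem norm_sq_star (z : ℂ) : ((‖z‖ : ℂ))^2 = star z * z := by
  rw [← Complex.ofReal_pow, Complex.sq_norm,
    Complex.normSq_eq_conj_mul_self]
  rfl

/-- Impulse conservation for the 1D Gross-Pitaevskii equation
`i ∂_t u = -(1/2) ∂_xx u + g |u|² u` on `[-L, L]` with homogeneous Dirichlet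
boundary values for `u` and `∂_x u`: the impulse
`P(t) = ∫ conj(u) (-i ∂_x) u dx` is constant. -/
theorem gpe_impulse_conservation
    (L T g : ℝ) (hL : 0 < L) (hT : 0 < T)
    (u : ℝ → ℝ → ℂ)
    (hreg : ContDiff ℝ 2 (fun p : ℝ × ℝ => u p.1 p.2))
    (hpde : ∀ t ∈ Set.Icc (0 : ℝ) T, ∀ x ∈ Set.Icc (-L) L,
      Complex.I * deriv (fun s => u s x) t
        = -(1/2 : ℂ) * deriv (deriv (fun y => u t y)) x
          + (g : ℂ) * ((‖u t x‖ : ℂ))^2 * u t x)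
    (hbc : ∀ t ∈ Set.Icc (0 : ℝ) T, u t (-L) = 0 ∧ u t L = 0)
    (hbcx : ∀ t ∈ Set.Icc (0 : ℝ) T,
      deriv (fun y => u t y) (-L) = 0 ∧ deriv (fun y => u t y) L = 0) :
    ∀ t ∈ Set.Icc (0 : ℝ) T,
      (∫ x in (-L)..L,
          (starRingEnd ℂ) (u t x) * (-Complex.I * deriv (fun y => u t y) x))
        = ∫ x in (-L)..L,
          (starRingEnd ℂ) (u 0 x) * (-Complex.I * deriv (fun y => u 0 y) x) := by
  intro t ht
  have hreg' : ContDiff ℝ 2 (pf u) := hreg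
  have hLL : (-L : ℝ) ≤ L := by linarith
  simp only [deriv_x u hreg']
  have hstar : (starRingEnd ℂ) = (star : ℂ → ℂ) := rfl
  rw [hstar]
  -- the time derivative of the integrand
  set h : ℝ → ℝ → ℂ := fun s x =>
    star (pd1 u (s, x)) * (-Complex.I * pd2 u (s, x))
      + star (u s x) * (-Complex.I * pd21 u (s, x)) with hhdef
  -- continuity facts
  have hcont : Continuous fun p : ℝ × ℝ => h p.1 p.2 := by
    rw [hhdef]
    exact (((hcd1 u hreg').continuous.star).mul
        (continuous_const.mul (hcd2 u hreg').continuous)).add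
      (((hc_u u hreg').star).mul (continuous_const.mul (hc_d21 u hreg')))
  have cslx : ∀ s : ℝ, Continuous fun x : ℝ => h s x := fun s =>
    hcont.comp (continuous_const.prodMk continuous_id)
  have cu : ∀ s : ℝ, Continuous fun x => star (u s x) * (-Complex.I * pd2 u (s, x)) :=
    fun s => ((((hc_u u hreg').star).mul
      (continuous_const.mul (hcd2 u hreg').continuous)).comp
        (continuous_const.prodMk continuous_id) : _)
  rw [← sub_eq_zero, ← intervalIntegral.integral_sub
    ((cu t).intervalIntegrable _ _) ((cu 0).intervalIntegrable _ _)]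
  -- fundamental theorem of calculus in time, for each x
  have hx0 : ∀ x : ℝ,
      star (u t x) * (-Complex.I * pd2 u (t, x))
        - star (u 0 x) * (-Complex.I * pd2 u (0, x)) = ∫ s in (0:ℝ)..t, h s x := by
    intro x
    symm
    apply intervalIntegral.integral_eq_sub_of_hasDerivAt
    · intro s _
      exact ((key_t u hreg' s x).star).mul ((key_xt u hreg' s x).const_mul (-Complex.I))
    · exact (hcont.comp (continuous_id.prodMk continuous_const)).intervalIntegrable 0 t
  simp only [hx0]
  -- Fubini
  have swap : (∫ x in (-L)..L, ∫ s in (0:ℝ)..t, h s x)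
      = ∫ s in (0:ℝ)..t, ∫ x in (-L)..L, h s x := by
    rw [intervalIntegral.integral_of_le hLL, intervalIntegral.integral_of_le ht.1]
    simp_rw [intervalIntegral.integral_of_le ht.1, intervalIntegral.integral_of_le hLL]
    apply MeasureTheory.integral_integral_swap
    rw [MeasureTheory.Measure.prod_restrict]
    have hIcc : MeasureTheory.IntegrableOn (fun q : ℝ × ℝ => h q.2 q.1)
        ((Set.Icc (-L) L) ×ˢ (Set.Icc (0:ℝ) t)) (MeasureTheory.volume.prod MeasureTheory.volume) :=
      ((hcont.comp continuous_swap).continuousOn).integrableOn_compact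
        (isCompact_Icc.prod isCompact_Icc)
    exact hIcc.mono_set (Set.prod_mono Set.Ioc_subset_Icc_self Set.Ioc_subset_Icc_self)
  rw [swap]
  -- the space integral vanishes for each time
  have hzero : ∀ s ∈ Set.uIcc (0:ℝ) t, (∫ x in (-L)..L, h s x) = (fun _ => (0:ℂ)) s := by
    intro s hs
    rw [Set.uIcc_of_le ht.1] at hs
    have hsT : s ∈ Set.Icc (0:ℝ) T := ⟨hs.1, hs.2.trans ht.2⟩
    refine inner_zero L g hL u hreg' s ?_ (hbc s hsT).1 (hbc s hsT).2 ?_ ?_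
    · intro x hx
      have := hpde s hsT x hx
      rwa [(key_t u hreg' s x).deriv, deriv_xx u hreg', norm_sq_star] at this
    · rw [← deriv_x u hreg']; exact (hbcx s hsT).1
    · rw [← deriv_x u hreg']; exact (hbcx s hsT).2
  rw [intervalIntegral.integral_congr hzero]
  simp

end GPEaux
end

section
/- Let M ≥ 2 be an integer, Δt > 0, Δx > 0, g ∈ ℝ, and let u, v : {0,1,…,M} → ℂ satisfy u_0 = u_M = v_0 = v_M = 0 and, for every j ∈ {1,…,M−1}, the semi-implicit Crank–Nicolson relation i (v_j − u_j)/Δt = −(1/2) [ (v_{j−1} − 2 v_j + v_{j+1})/Δx² + (u_{j−1} − 2 u_j + u_{j+1})/Δx² ] + (g/2) (|v_j|² + |u_j|²) (v_j + u_j)/2. Then the discrete mass is conserved: Σ_{j=0}^{M} |v_j|² = Σ_{j=0}^{M} |u_j|². -/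
open Finset

private lemma conj_mul_im_self (z : ℂ) : ((starRingEnd ℂ) z * z).im = 0 := by
  simp [Complex.mul_im]; ring

private lemma conj_mul_im_swap (a b : ℂ) :
    ((starRingEnd ℂ) a * b).im = -((starRingEnd ℂ) b * a).im := by
  simp [Complex.mul_im]; ring

private lemma ofReal_mul_im' (r : ℝ) (z : ℂ) : ((r:ℂ) * z).im = r * z.im := by
  simp [Complex.mul_im]

private lemma mass_diff_eq (a b : ℂ) (r : ℝ) (hr : r ≠ 0) :
    ‖a‖^2 - ‖b‖^2
      = r * ((starRingEnd ℂ) (a + b) * (Complex.I * (a - b) / (r:ℂ))).im := by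
  have ha : ‖a‖^2 = a.re^2 + a.im^2 := by
    rw [Complex.sq_norm, Complex.normSq_apply]; ring
  have hb : ‖b‖^2 = b.re^2 + b.im^2 := by
    rw [Complex.sq_norm, Complex.normSq_apply]; ring
  rw [ha, hb]
  simp only [Complex.div_im, Complex.div_re, Complex.mul_im, Complex.mul_re, Complex.I_re,
    Complex.I_im, Complex.conj_re, Complex.conj_im, Complex.add_re, Complex.add_im,
    Complex.sub_re, Complex.sub_im, Complex.ofReal_re, Complex.ofReal_im,
    Complex.normSq_apply]
  field_simp
  ring


/-- Discrete mass conservation of the semi-implicit Crank-Nicolson scheme for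
the Gross-Pitaevskii equation with homogeneous Dirichlet boundary values. -/
theorem cn_discrete_mass_conservation
    (M : ℕ) (hM : 2 ≤ M) (dt dx g : ℝ) (hdt : 0 < dt) (hdx : 0 < dx)
    (u v : ℕ → ℂ)
    (hu0 : u 0 = 0) (huM : u M = 0) (hv0 : v 0 = 0) (hvM : v M = 0)
    (hscheme : ∀ j : ℕ, 1 ≤ j → j < M →
      Complex.I * (v j - u j) / (dt : ℂ)
        = -(1/2 : ℂ) * ((v (j-1) - 2 * v j + v (j+1)) / (dx : ℂ)^2
              + (u (j-1) - 2 * u j + u (j+1)) / (dx : ℂ)^2)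
          + ((g : ℂ) / 2) * (((‖v j‖^2 + ‖u j‖^2 : ℝ)) : ℂ)
              * (v j + u j) / 2) :
    ∑ j ∈ Finset.range (M+1), ‖v j‖^2 = ∑ j ∈ Finset.range (M+1), ‖u j‖^2 := by
  obtain ⟨m, rfl⟩ : ∃ m, M = m + 1 := ⟨M - 1, by omega⟩
  have hdt0 : dt ≠ 0 := hdt.ne'
  set w : ℕ → ℂ := fun j => v j + u j with hw
  have hw0 : w 0 = 0 := by simp [hw, hu0, hv0]
  have hwM : w (m+1) = 0 := by simp [hw, huM, hvM]
  -- reduce sums to interior points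
  have hsum : ∀ f : ℕ → ℂ, f 0 = 0 → f (m+1) = 0 →
      ∑ j ∈ Finset.range (m+1+1), ‖f j‖^2 = ∑ j ∈ Finset.Ico 1 (m+1), ‖f j‖^2 := by
    intro f h0 hMf
    rw [Finset.sum_range_succ, hMf, Finset.range_eq_Ico,
      Finset.sum_eq_sum_Ico_succ_bot (by omega : 0 < m+1), h0]
    simp
  rw [hsum v hv0 hvM, hsum u hu0 huM, ← sub_eq_zero, ← Finset.sum_sub_distrib]
  -- summation-by-parts facts
  have hX : ∑ j ∈ Finset.Ico 1 (m+1), ((starRingEnd ℂ) (w j) * w (j-1)).im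
      = ∑ i ∈ Finset.range m, ((starRingEnd ℂ) (w (i+1)) * w i).im := by
    rw [Finset.sum_Ico_eq_sum_range]
    refine Finset.sum_congr (by norm_num) fun i _ => ?_
    rw [show 1 + i = i + 1 from by omega, show i + 1 - 1 = i from by omega]
  have hY : ∑ j ∈ Finset.Ico 1 (m+1), ((starRingEnd ℂ) (w j) * w (j+1)).im
      = -∑ i ∈ Finset.range m, ((starRingEnd ℂ) (w (i+1)) * w i).im := by
    have h1 : ∑ j ∈ Finset.Ico 1 (m+1), ((starRingEnd ℂ) (w j) * w (j+1)).im
        = ∑ j ∈ Finset.range (m+1), ((starRingEnd ℂ) (w j) * w (j+1)).im := by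
      rw [Finset.range_eq_Ico, Finset.sum_eq_sum_Ico_succ_bot (by omega : 0 < m+1), hw0]
      simp
    rw [h1, Finset.sum_range_succ, hwM, mul_zero, Complex.zero_im, add_zero]
    rw [Finset.sum_congr rfl (fun i _ => conj_mul_im_swap (w i) (w (i+1))),
      Finset.sum_neg_distrib]
  -- per-term identity for the right-hand side
  have hrhs : ∀ j ∈ Finset.Ico 1 (m+1),
      ((starRingEnd ℂ) (w j) *
        (-(1/2 : ℂ) * ((v (j-1) - 2 * v j + v (j+1)) / (dx : ℂ)^2
              + (u (j-1) - 2 * u j + u (j+1)) / (dx : ℂ)^2)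
          + ((g : ℂ) / 2) * (((‖v j‖^2 + ‖u j‖^2 : ℝ)) : ℂ)
              * (v j + u j) / 2)).im
      = -(1/(2*dx^2)) *
          (((starRingEnd ℂ) (w j) * w (j-1)).im + ((starRingEnd ℂ) (w j) * w (j+1)).im) := by
    intro j _
    have hc : (starRingEnd ℂ) (w j) *
        (-(1/2 : ℂ) * ((v (j-1) - 2 * v j + v (j+1)) / (dx : ℂ)^2
              + (u (j-1) - 2 * u j + u (j+1)) / (dx : ℂ)^2)
          + ((g : ℂ) / 2) * (((‖v j‖^2 + ‖u j‖^2 : ℝ)) : ℂ)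
              * (v j + u j) / 2)
        = ((-(1/(2*dx^2)) : ℝ) : ℂ) *
            ((starRingEnd ℂ) (w j) * w (j-1) + (starRingEnd ℂ) (w j) * w (j+1))
          + (((1/dx^2 + g * (‖v j‖^2 + ‖u j‖^2)/4 : ℝ)) : ℂ) *
            ((starRingEnd ℂ) (w j) * w j) := by
      simp only [hw]
      push_cast
      ring
    rw [hc, Complex.add_im, ofReal_mul_im', ofReal_mul_im', Complex.add_im,
      conj_mul_im_self]
    ring
  -- main computation
  calc ∑ j ∈ Finset.Ico 1 (m+1), (‖v j‖^2 - ‖u j‖^2)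
      = ∑ j ∈ Finset.Ico 1 (m+1),
          dt * ((starRingEnd ℂ) (w j) * (Complex.I * (v j - u j) / (dt:ℂ))).im := by
        refine Finset.sum_congr rfl fun j _ => ?_
        exact mass_diff_eq (v j) (u j) dt hdt0
    _ = ∑ j ∈ Finset.Ico 1 (m+1),
          dt * ((starRingEnd ℂ) (w j) *
            (-(1/2 : ℂ) * ((v (j-1) - 2 * v j + v (j+1)) / (dx : ℂ)^2
                + (u (j-1) - 2 * u j + u (j+1)) / (dx : ℂ)^2)
              + ((g : ℂ) / 2) * (((‖v j‖^2 + ‖u j‖^2 : ℝ)) : ℂ)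
                * (v j + u j) / 2)).im := by
        refine Finset.sum_congr rfl fun j hj => ?_
        obtain ⟨h1, h2⟩ := Finset.mem_Ico.mp hj
        rw [hscheme j h1 h2]
    _ = ∑ j ∈ Finset.Ico 1 (m+1),
          (dt * -(1/(2*dx^2))) *
            (((starRingEnd ℂ) (w j) * w (j-1)).im
              + ((starRingEnd ℂ) (w j) * w (j+1)).im) := by
        refine Finset.sum_congr rfl fun j hj => ?_
        rw [hrhs j hj]; ring
    _ = (dt * -(1/(2*dx^2))) *
          ((∑ j ∈ Finset.Ico 1 (m+1), ((starRingEnd ℂ) (w j) * w (j-1)).im)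
            + ∑ j ∈ Finset.Ico 1 (m+1), ((starRingEnd ℂ) (w j) * w (j+1)).im) := by
        rw [← Finset.mul_sum, Finset.sum_add_distrib]
    _ = 0 := by rw [hX, hY]; ring
end

section
/- Let M ≥ 2 be an integer, Δt > 0, Δx > 0, g ∈ ℝ, and let u, v : {0,1,…,M} → ℂ satisfy u_0 = u_M = v_0 = v_M = 0 and, for every j ∈ {1,…,M−1}, the semi-implicit Crank–Nicolson relation i (v_j − u_j)/Δt = −(1/2) [ (v_{j−1} − 2 v_j + v_{j+1})/Δx² + (u_{j−1} − 2 u_j + u_{j+1})/Δx² ] + (g/2) (|v_j|² + |u_j|²) (v_j + u_j)/2. Then the discrete energy is conserved: (1/(2Δx²)) Σ_{j=0}^{M−1} |v_{j+1} − v_j|² + (g/4) Σ_{j=1}^{M−1} |v_j|⁴ = (1/(2Δx²)) Σ_{j=0}^{M−1} |u_{j+1} − u_j|² + (g/4) Σ_{j=1}^{M−1} |u_j|⁴. -/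
open Finset

private lemma re_mul_conj_add_sub (a b : ℂ) :
    ((a + b) * (starRingEnd ℂ) (a - b)).re = ‖a‖^2 - ‖b‖^2 := by
  simp [Complex.mul_re, Complex.sq_norm, Complex.normSq_apply]
  ring

private lemma re_I_self (z : ℂ) (d : ℝ) :
    (Complex.I * z / (d:ℂ) * (starRingEnd ℂ) z).re = 0 := by
  have h : Complex.I * z / (d:ℂ) * (starRingEnd ℂ) z
      = Complex.I * ((Complex.normSq z : ℝ) : ℂ) / (d:ℂ) := by
    rw [div_mul_eq_mul_div, mul_assoc, Complex.mul_conj]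
  rw [h, Complex.div_ofReal_re]
  simp

private lemma abel_tel (n : ℕ) (a c : ℕ → ℂ) :
    ∑ j ∈ range n, ((a (j+1) - a j) * c (j+1) + a j * (c (j+1) - c j))
      = a n * c n - a 0 * c 0 := by
  induction n with
  | zero => simp
  | succ n ih => rw [Finset.sum_range_succ, ih]; ring

private lemma sbp (m : ℕ) (s w : ℕ → ℂ) (h0 : w 0 = 0) (hm : w (m+1) = 0) :
    ∑ j ∈ Finset.Icc 1 m, (s (j-1) - 2 * s j + s (j+1)) * (starRingEnd ℂ) (w j)
    = -∑ j ∈ Finset.range (m+1), (s (j+1) - s j) *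
        ((starRingEnd ℂ) (w (j+1)) - (starRingEnd ℂ) (w j)) := by
  set a : ℕ → ℂ := fun j => s (j+1) - s j with ha
  set c : ℕ → ℂ := fun j => (starRingEnd ℂ) (w j) with hc
  have key := abel_tel (m+1) a c
  have hc0 : c 0 = 0 := by simp [hc, h0]
  have hcm : c (m+1) = 0 := by simp [hc, hm]
  rw [Finset.sum_add_distrib] at key
  rw [hc0, hcm] at key
  simp only [mul_zero, zero_mul, zero_sub, sub_zero] at key
  -- key : ∑ (a (j+1) - a j) * c (j+1) + ∑ a j * (c (j+1) - c j) = 0  (over range (m+1))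
  have hL : ∑ j ∈ Finset.Icc 1 m, (s (j-1) - 2 * s j + s (j+1)) * (starRingEnd ℂ) (w j)
      = ∑ j ∈ Finset.range (m+1), (a (j+1) - a j) * c (j+1) := by
    rw [← Finset.Ico_add_one_right_eq_Icc, Finset.sum_Ico_eq_sum_range]
    have h1 : m + 1 - 1 = m := by omega
    rw [h1]
    rw [Finset.sum_range_succ, hcm, mul_zero, add_zero]
    apply Finset.sum_congr rfl
    intro j _
    have : 1 + j - 1 = j := by omega
    rw [this]
    simp only [ha, hc]
    ring_nf
  rw [hL]
  have : ∑ j ∈ Finset.range (m+1), (a (j+1) - a j) * c (j+1)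
      = -(∑ j ∈ Finset.range (m+1), a j * (c (j+1) - c j)) := by
    linear_combination key
  rw [this]

private lemma pointwise (dt dx g : ℝ) (hdx : dx ≠ 0) (vm v0 vp um u0 up : ℂ)
    (h : Complex.I * (v0 - u0) / (dt : ℂ)
        = -(1/2 : ℂ) * ((vm - 2 * v0 + vp) / (dx : ℂ)^2
              + (um - 2 * u0 + up) / (dx : ℂ)^2)
          + ((g : ℂ) / 2) * (((‖v0‖^2 + ‖u0‖^2 : ℝ)) : ℂ) * (v0 + u0) / 2) :
    (g/4) * (‖v0‖^4 - ‖u0‖^4)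
      = (1/(2*dx^2)) *
        ((((vm + um) - 2*(v0 + u0) + (vp + up)) * (starRingEnd ℂ) (v0 - u0)).re) := by
  have hdx2 : (dx:ℂ)^2 ≠ 0 := by
    simpa using pow_ne_zero 2 (Complex.ofReal_ne_zero.mpr hdx)
  have h2 := congrArg (fun z => (z * (starRingEnd ℂ) (v0 - u0)).re) h
  rw [re_I_self] at h2
  have hrhs : (-(1/2 : ℂ) * ((vm - 2 * v0 + vp) / (dx : ℂ)^2
              + (um - 2 * u0 + up) / (dx : ℂ)^2)
          + ((g : ℂ) / 2) * (((‖v0‖^2 + ‖u0‖^2 : ℝ)) : ℂ) * (v0 + u0) / 2)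
          * (starRingEnd ℂ) (v0 - u0)
      = ((-(1/(2*dx^2)) : ℝ) : ℂ) *
          (((vm + um) - 2*(v0 + u0) + (vp + up)) * (starRingEnd ℂ) (v0 - u0))
        + (((g/4) * (‖v0‖^2 + ‖u0‖^2) : ℝ) : ℂ) *
          ((v0 + u0) * (starRingEnd ℂ) (v0 - u0)) := by
    push_cast
    field_simp
    ring
  rw [hrhs] at h2
  rw [Complex.add_re, Complex.re_ofReal_mul, Complex.re_ofReal_mul,
    re_mul_conj_add_sub] at h2
  have hv : ‖v0‖^4 = (‖v0‖^2)^2 := by ring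
  have hu : ‖u0‖^4 = (‖u0‖^2)^2 := by ring
  rw [hv, hu]
  have hx : dx^2 ≠ 0 := pow_ne_zero 2 hdx
  field_simp at h2 ⊢
  nlinarith [h2]


/-- Discrete energy conservation of the semi-implicit Crank-Nicolson scheme for
the Gross-Pitaevskii equation with homogeneous Dirichlet boundary values. -/
theorem cn_discrete_energy_conservation
    (M : ℕ) (hM : 2 ≤ M) (dt dx g : ℝ) (hdt : 0 < dt) (hdx : 0 < dx)
    (u v : ℕ → ℂ)
    (hu0 : u 0 = 0) (huM : u M = 0) (hv0 : v 0 = 0) (hvM : v M = 0)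
    (hscheme : ∀ j : ℕ, 1 ≤ j → j < M →
      Complex.I * (v j - u j) / (dt : ℂ)
        = -(1/2 : ℂ) * ((v (j-1) - 2 * v j + v (j+1)) / (dx : ℂ)^2
              + (u (j-1) - 2 * u j + u (j+1)) / (dx : ℂ)^2)
          + ((g : ℂ) / 2) * (((‖v j‖^2 + ‖u j‖^2 : ℝ)) : ℂ)
              * (v j + u j) / 2) :
    (1 / (2 * dx^2)) * ∑ j ∈ Finset.range M, ‖v (j+1) - v j‖^2
        + (g / 4) * ∑ j ∈ Finset.Icc 1 (M-1), ‖v j‖^4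
      = (1 / (2 * dx^2)) * ∑ j ∈ Finset.range M, ‖u (j+1) - u j‖^2
        + (g / 4) * ∑ j ∈ Finset.Icc 1 (M-1), ‖u j‖^4 := by
  obtain ⟨m, rfl⟩ : ∃ m, M = m + 1 := ⟨M - 1, by omega⟩
  have hm1 : m + 1 - 1 = m := by omega
  rw [hm1]
  have hne : dx ≠ 0 := ne_of_gt hdx
  set s : ℕ → ℂ := fun j => v j + u j with hs
  set w : ℕ → ℂ := fun j => v j - u j with hw
  have hpt : ∀ j ∈ Finset.Icc 1 m,
      (g/4) * (‖v j‖^4 - ‖u j‖^4)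
        = (1/(2*dx^2)) * (((s (j-1) - 2 * s j + s (j+1)) * (starRingEnd ℂ) (w j)).re) := by
    intro j hj
    rw [Finset.mem_Icc] at hj
    exact pointwise dt dx g hne _ _ _ _ _ _ (hscheme j hj.1 (by omega))
  have key : ∑ j ∈ Finset.Icc 1 m, (g/4) * (‖v j‖^4 - ‖u j‖^4)
      = (1/(2*dx^2)) *
        ((∑ j ∈ Finset.Icc 1 m, (s (j-1) - 2 * s j + s (j+1)) * (starRingEnd ℂ) (w j)).re) := by
    rw [Finset.sum_congr rfl hpt, ← Finset.mul_sum, Complex.re_sum]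
  rw [sbp m s w (by simp [hw, hv0, hu0]) (by simp [hw, hvM, huM])] at key
  have hterm : ∀ j, ((s (j+1) - s j) *
        ((starRingEnd ℂ) (w (j+1)) - (starRingEnd ℂ) (w j))).re
      = ‖v (j+1) - v j‖^2 - ‖u (j+1) - u j‖^2 := by
    intro j
    have : (s (j+1) - s j) * ((starRingEnd ℂ) (w (j+1)) - (starRingEnd ℂ) (w j))
        = ((v (j+1) - v j) + (u (j+1) - u j)) *
            (starRingEnd ℂ) ((v (j+1) - v j) - (u (j+1) - u j)) := by
      simp only [hs, hw, map_sub]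
      ring
    rw [this, re_mul_conj_add_sub]
  have key2 : ∑ j ∈ Finset.Icc 1 m, (g/4) * (‖v j‖^4 - ‖u j‖^4)
      = -(1/(2*dx^2)) * ∑ j ∈ Finset.range (m+1),
          (‖v (j+1) - v j‖^2 - ‖u (j+1) - u j‖^2) := by
    rw [key, Complex.neg_re, Complex.re_sum]
    rw [Finset.sum_congr rfl (fun j _ => hterm j)]
    ring
  simp only [mul_sub, Finset.sum_sub_distrib] at key2
  simp only [← Finset.mul_sum] at key2 ⊢
  linarith
end

section
/- Let M be a positive integer, Δt > 0, g ∈ ℝ, μ : {0,…,M−1} → ℝ, and let u : {0,…,M−1} → ℂ. Define the time-splitting spectral step: first w_j = exp(−i g |u_j|² Δt / 2) u_j for each j; then ŵ_l = Σ_{j=0}^{M−1} w_j exp(−2πi j l / M), z_j = (1/M) Σ_{l=0}^{M−1} exp(−i μ_l² Δt / 2) ŵ_l exp(2πi j l / M); and finally v_j = exp(−i g |z_j|² Δt / 2) z_j. Then the discrete mass is preserved over the full splitting step: Σ_{j=0}^{M−1} |v_j|² = Σ_{j=0}^{M−1} |u_j|². -/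
open Finset Complex

lemma orth (M : ℕ) (hM : 0 < M) {a b : ℕ} (ha : a < M) (hb : b < M) :
    ∑ j ∈ Finset.range M,
      Complex.exp ((2*(Real.pi:ℂ)*Complex.I*(j:ℂ)*(a:ℂ))/(M:ℂ)
        - (2*(Real.pi:ℂ)*Complex.I*(j:ℂ)*(b:ℂ))/(M:ℂ))
    = if a = b then (M : ℂ) else 0 := by
  have hMC : (M:ℂ) ≠ 0 := Nat.cast_ne_zero.2 hM.ne'
  set t : ℂ := (2*(Real.pi:ℂ)*Complex.I*((a:ℂ)-(b:ℂ)))/(M:ℂ) with ht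
  have harg : ∀ j : ℕ, (2*(Real.pi:ℂ)*Complex.I*(j:ℂ)*(a:ℂ))/(M:ℂ)
        - (2*(Real.pi:ℂ)*Complex.I*(j:ℂ)*(b:ℂ))/(M:ℂ) = (j:ℂ) * t := by
    intro j; rw [ht]; ring
  simp only [harg]
  by_cases hab : a = b
  · subst hab
    simp [ht, sub_self]
  · have hterm : ∀ j : ℕ, Complex.exp ((j:ℂ) * t) = (Complex.exp t) ^ j := by
      intro j; rw [← Complex.exp_nat_mul]
    simp only [hterm, hab, if_false]
    have hpow : (Complex.exp t) ^ M = 1 := by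
      rw [← Complex.exp_nat_mul]
      have h2 : (M:ℂ) * t = ((((a:ℤ) - (b:ℤ)) : ℤ) : ℂ) * (2 * (Real.pi:ℂ) * Complex.I) := by
        rw [ht]; push_cast; field_simp
      rw [h2, Complex.exp_int_mul_two_pi_mul_I]
    have hne : Complex.exp t ≠ 1 := by
      intro h
      rw [Complex.exp_eq_one_iff] at h
      obtain ⟨n, hn⟩ := h
      rw [ht] at hn
      have hpi : (2*(Real.pi:ℂ)*Complex.I) ≠ 0 := by
        simp [Real.pi_ne_zero, Complex.I_ne_zero]
      have hC : (a:ℂ) - (b:ℂ) = (n:ℂ) * (M:ℂ) := by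
        field_simp at hn
        have h3 : (2*(Real.pi:ℂ)*Complex.I) * ((a:ℂ)-(b:ℂ))
            = (2*(Real.pi:ℂ)*Complex.I) * ((n:ℂ)*(M:ℂ)) := by linear_combination (2*(Real.pi:ℂ)*Complex.I) * hn
        exact mul_left_cancel₀ hpi h3
      have h4 : (a:ℤ) - (b:ℤ) = n * M := by exact_mod_cast hC
      have hne0 : n ≠ 0 := by rintro rfl; simp at h4; omega
      have h6 : (M:ℤ) ≤ |n| * M := le_mul_of_one_le_left (by positivity) (Int.one_le_abs hne0)
      have h7 : |(a:ℤ) - b| = |n| * M := by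
        rw [h4, abs_mul, abs_of_nonneg (by positivity : (0:ℤ) ≤ (M:ℤ))]
      have h8 : |(a:ℤ) - b| < M := abs_lt.mpr ⟨by omega, by omega⟩
      omega
    rw [geom_sum_eq hne, hpow, sub_self, zero_div]


lemma parseval_complex (M : ℕ) (hM : 0 < M) (c : ℕ → ℂ) :
    ∑ j ∈ Finset.range M,
      ((∑ l ∈ Finset.range M, c l * Complex.exp ((2*(Real.pi:ℂ)*Complex.I*(j:ℂ)*(l:ℂ))/(M:ℂ))) *
       (starRingEnd ℂ) (∑ l ∈ Finset.range M, c l * Complex.exp ((2*(Real.pi:ℂ)*Complex.I*(j:ℂ)*(l:ℂ))/(M:ℂ))))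
    = (M:ℂ) * ∑ l ∈ Finset.range M, c l * (starRingEnd ℂ) (c l) := by
  have hconjexp : ∀ j l : ℕ, (starRingEnd ℂ) (Complex.exp ((2*(Real.pi:ℂ)*Complex.I*(j:ℂ)*(l:ℂ))/(M:ℂ)))
      = Complex.exp (-((2*(Real.pi:ℂ)*Complex.I*(j:ℂ)*(l:ℂ))/(M:ℂ))) := by
    intro j l
    rw [← Complex.exp_conj]
    congr 1
    simp [map_div₀, map_ofNat]
    ring
  have expand : ∀ j : ℕ,
      ((∑ l ∈ Finset.range M, c l * Complex.exp ((2*(Real.pi:ℂ)*Complex.I*(j:ℂ)*(l:ℂ))/(M:ℂ))) *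
       (starRingEnd ℂ) (∑ l ∈ Finset.range M, c l * Complex.exp ((2*(Real.pi:ℂ)*Complex.I*(j:ℂ)*(l:ℂ))/(M:ℂ))))
      = ∑ l ∈ Finset.range M, ∑ m ∈ Finset.range M,
          (c l * (starRingEnd ℂ) (c m)) *
            Complex.exp ((2*(Real.pi:ℂ)*Complex.I*(j:ℂ)*(l:ℂ))/(M:ℂ)
              - (2*(Real.pi:ℂ)*Complex.I*(j:ℂ)*(m:ℂ))/(M:ℂ)) := by
    intro j
    rw [map_sum, Finset.sum_mul_sum]
    refine Finset.sum_congr rfl fun l _ => Finset.sum_congr rfl fun m _ => ?_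
    rw [map_mul, hconjexp]
    rw [show (2*(Real.pi:ℂ)*Complex.I*(j:ℂ)*(l:ℂ))/(M:ℂ) - (2*(Real.pi:ℂ)*Complex.I*(j:ℂ)*(m:ℂ))/(M:ℂ)
        = (2*(Real.pi:ℂ)*Complex.I*(j:ℂ)*(l:ℂ))/(M:ℂ) + -((2*(Real.pi:ℂ)*Complex.I*(j:ℂ)*(m:ℂ))/(M:ℂ)) from by ring]
    rw [Complex.exp_add]
    ring
  simp only [expand]
  rw [Finset.sum_comm]
  have swap2 : ∀ l : ℕ, ∑ j ∈ Finset.range M, ∑ m ∈ Finset.range M,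
      (c l * (starRingEnd ℂ) (c m)) *
        Complex.exp ((2*(Real.pi:ℂ)*Complex.I*(j:ℂ)*(l:ℂ))/(M:ℂ)
          - (2*(Real.pi:ℂ)*Complex.I*(j:ℂ)*(m:ℂ))/(M:ℂ))
      = ∑ m ∈ Finset.range M, ∑ j ∈ Finset.range M,
      (c l * (starRingEnd ℂ) (c m)) *
        Complex.exp ((2*(Real.pi:ℂ)*Complex.I*(j:ℂ)*(l:ℂ))/(M:ℂ)
          - (2*(Real.pi:ℂ)*Complex.I*(j:ℂ)*(m:ℂ))/(M:ℂ)) := fun l => Finset.sum_comm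
  calc ∑ l ∈ Finset.range M, ∑ j ∈ Finset.range M, ∑ m ∈ Finset.range M,
      (c l * (starRingEnd ℂ) (c m)) *
        Complex.exp ((2*(Real.pi:ℂ)*Complex.I*(j:ℂ)*(l:ℂ))/(M:ℂ)
          - (2*(Real.pi:ℂ)*Complex.I*(j:ℂ)*(m:ℂ))/(M:ℂ))
      = ∑ l ∈ Finset.range M, ∑ m ∈ Finset.range M,
          (c l * (starRingEnd ℂ) (c m)) *
          ∑ j ∈ Finset.range M, Complex.exp ((2*(Real.pi:ℂ)*Complex.I*(j:ℂ)*(l:ℂ))/(M:ℂ)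
            - (2*(Real.pi:ℂ)*Complex.I*(j:ℂ)*(m:ℂ))/(M:ℂ)) := by
        refine Finset.sum_congr rfl fun l _ => ?_
        rw [swap2 l]
        exact Finset.sum_congr rfl fun m _ => (Finset.mul_sum _ _ _).symm
    _ = ∑ l ∈ Finset.range M, ∑ m ∈ Finset.range M,
          (c l * (starRingEnd ℂ) (c m)) * (if l = m then (M:ℂ) else 0) := by
        refine Finset.sum_congr rfl fun l hl => Finset.sum_congr rfl fun m hm => ?_
        rw [orth M hM (Finset.mem_range.1 hl) (Finset.mem_range.1 hm)]
    _ = ∑ l ∈ Finset.range M, (c l * (starRingEnd ℂ) (c l)) * (M:ℂ) := by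
        refine Finset.sum_congr rfl fun l hl => ?_
        rw [Finset.sum_eq_single l]
        · simp
        · intro m _ hml; rw [if_neg (fun h => hml h.symm), mul_zero]
        · intro h; exact absurd hl h
    _ = (M:ℂ) * ∑ l ∈ Finset.range M, c l * (starRingEnd ℂ) (c l) := by
        rw [Finset.mul_sum]; exact Finset.sum_congr rfl fun l _ => by ring

lemma key_normsq (x : ℂ) : ((‖x‖:ℝ):ℂ)^2 = x * (starRingEnd ℂ) x := by
  rw [Complex.mul_conj, Complex.normSq_eq_norm_sq]
  push_cast; ring

lemma norm_phase3 (a b c : ℝ) :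
    ‖Complex.exp (-Complex.I * (a:ℂ) * (b:ℂ) * ((c:ℂ)/2))‖ = 1 := by
  have h : -Complex.I * (a:ℂ) * (b:ℂ) * ((c:ℂ)/2) = ((-(a*b*c/2):ℝ):ℂ) * Complex.I := by
    push_cast; ring
  rw [h, Complex.norm_exp_ofReal_mul_I]

lemma phase_mul_conj (a b : ℝ) :
    Complex.exp (-Complex.I * (a:ℂ) * ((b:ℂ)/2)) *
      (starRingEnd ℂ) (Complex.exp (-Complex.I * (a:ℂ) * ((b:ℂ)/2))) = 1 := by
  rw [← Complex.exp_conj, ← Complex.exp_add]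
  have h : (starRingEnd ℂ) (-Complex.I * (a:ℂ) * ((b:ℂ)/2))
      = -(-Complex.I * (a:ℂ) * ((b:ℂ)/2)) := by
    simp [map_div₀, map_ofNat]
  rw [h, add_neg_cancel, Complex.exp_zero]

/-- The full Strang time-splitting spectral (TSSP) step for the
Gross-Pitaevskii equation preserves the discrete mass. -/
theorem tssp_mass_conservation
    (M : ℕ) (hM : 0 < M) (dt g : ℝ) (hdt : 0 < dt) (μ : ℕ → ℝ)
    (u w what z v : ℕ → ℂ)
    (hw : ∀ j : ℕ, w j
      = Complex.exp (-Complex.I * (g : ℂ) * ((‖u j‖^2 : ℝ) : ℂ) * ((dt : ℂ) / 2)) * u j)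
    (hwhat : ∀ l : ℕ, what l
      = ∑ j ∈ Finset.range M,
          w j * Complex.exp (-(2 * (Real.pi : ℂ) * Complex.I * (j : ℂ) * (l : ℂ)) / (M : ℂ)))
    (hz : ∀ j : ℕ, z j
      = (1 / (M : ℂ)) * ∑ l ∈ Finset.range M,
          Complex.exp (-Complex.I * (((μ l)^2 : ℝ) : ℂ) * ((dt : ℂ) / 2)) * what l
            * Complex.exp ((2 * (Real.pi : ℂ) * Complex.I * (j : ℂ) * (l : ℂ)) / (M : ℂ)))
    (hv : ∀ j : ℕ, v j
      = Complex.exp (-Complex.I * (g : ℂ) * ((‖z j‖^2 : ℝ) : ℂ) * ((dt : ℂ) / 2)) * z j) :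
    ∑ j ∈ Finset.range M, ‖v j‖^2 = ∑ j ∈ Finset.range M, ‖u j‖^2 := by
  have hMC : (M:ℂ) ≠ 0 := Nat.cast_ne_zero.2 hM.ne'
  -- norm of the nonlinear phases is 1
  have hvz : ∀ j, ‖v j‖^2 = ‖z j‖^2 := by
    intro j; rw [hv, norm_mul, norm_phase3, one_mul]
  have hwu : ∀ j, ‖w j‖^2 = ‖u j‖^2 := by
    intro j; rw [hw, norm_mul, norm_phase3, one_mul]
  -- the Fourier coefficients of z
  set c : ℕ → ℂ := fun l =>
    Complex.exp (-Complex.I * (((μ l)^2 : ℝ) : ℂ) * ((dt : ℂ) / 2)) * what l with hc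
  have hzc : ∀ j : ℕ, z j = (1 / (M:ℂ)) * ∑ l ∈ Finset.range M,
      c l * Complex.exp ((2*(Real.pi:ℂ)*Complex.I*(j:ℂ)*(l:ℂ))/(M:ℂ)) := fun j => hz j
  -- middle step in ℂ
  have middle : ∑ j ∈ Finset.range M, ‖z j‖^2 = ∑ j ∈ Finset.range M, ‖w j‖^2 := by
    have hCC : ∑ j ∈ Finset.range M, ((‖z j‖:ℝ):ℂ)^2
        = ∑ j ∈ Finset.range M, ((‖w j‖:ℝ):ℂ)^2 := by
      simp only [key_normsq]
      have hconjM : (starRingEnd ℂ) (1/(M:ℂ)) = 1/(M:ℂ) := by simp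
      -- Step A : Parseval for the inverse transform
      have stepA : ∑ j ∈ Finset.range M, z j * (starRingEnd ℂ) (z j)
          = (1/(M:ℂ)) * ∑ l ∈ Finset.range M, c l * (starRingEnd ℂ) (c l) := by
        calc ∑ j ∈ Finset.range M, z j * (starRingEnd ℂ) (z j)
            = (1/(M:ℂ)) * (1/(M:ℂ)) *
              ∑ j ∈ Finset.range M,
                (∑ l ∈ Finset.range M,
                  c l * Complex.exp ((2*(Real.pi:ℂ)*Complex.I*(j:ℂ)*(l:ℂ))/(M:ℂ))) *
                (starRingEnd ℂ) (∑ l ∈ Finset.range M,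
                  c l * Complex.exp ((2*(Real.pi:ℂ)*Complex.I*(j:ℂ)*(l:ℂ))/(M:ℂ))) := by
              rw [Finset.mul_sum]
              refine Finset.sum_congr rfl fun j _ => ?_
              rw [hzc j, map_mul, hconjM]; ring
          _ = (1/(M:ℂ)) * (1/(M:ℂ)) * ((M:ℂ) *
                ∑ l ∈ Finset.range M, c l * (starRingEnd ℂ) (c l)) := by
              rw [parseval_complex M hM c]
          _ = (1/(M:ℂ)) * ∑ l ∈ Finset.range M, c l * (starRingEnd ℂ) (c l) := by
              field_simp
      -- Step B : the linear phases are unimodular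
      have stepB : ∑ l ∈ Finset.range M, c l * (starRingEnd ℂ) (c l)
          = ∑ l ∈ Finset.range M, what l * (starRingEnd ℂ) (what l) := by
        refine Finset.sum_congr rfl fun l _ => ?_
        rw [hc]
        simp only [map_mul]
        calc Complex.exp (-Complex.I * (((μ l)^2 : ℝ) : ℂ) * ((dt : ℂ) / 2)) * what l *
              ((starRingEnd ℂ) (Complex.exp (-Complex.I * (((μ l)^2 : ℝ) : ℂ) * ((dt : ℂ) / 2))) *
                (starRingEnd ℂ) (what l))
            = (Complex.exp (-Complex.I * (((μ l)^2 : ℝ) : ℂ) * ((dt : ℂ) / 2)) *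
                (starRingEnd ℂ) (Complex.exp (-Complex.I * (((μ l)^2 : ℝ) : ℂ) * ((dt : ℂ) / 2)))) *
              (what l * (starRingEnd ℂ) (what l)) := by ring
          _ = what l * (starRingEnd ℂ) (what l) := by rw [phase_mul_conj, one_mul]
      -- Step C : Parseval for the forward transform
      have hconjwhat : ∀ l : ℕ, (starRingEnd ℂ) (what l)
          = ∑ j ∈ Finset.range M, (starRingEnd ℂ) (w j) *
              Complex.exp ((2*(Real.pi:ℂ)*Complex.I*(l:ℂ)*(j:ℂ))/(M:ℂ)) := by
        intro l
        rw [hwhat, map_sum]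
        refine Finset.sum_congr rfl fun j _ => ?_
        rw [map_mul, ← Complex.exp_conj]
        congr 1
        simp [map_div₀, map_ofNat]
        ring
      have stepC : ∑ l ∈ Finset.range M, what l * (starRingEnd ℂ) (what l)
          = (M:ℂ) * ∑ j ∈ Finset.range M, w j * (starRingEnd ℂ) (w j) := by
        have hP := parseval_complex M hM (fun j => (starRingEnd ℂ) (w j))
        calc ∑ l ∈ Finset.range M, what l * (starRingEnd ℂ) (what l)
            = ∑ l ∈ Finset.range M,
                (∑ j ∈ Finset.range M, (starRingEnd ℂ) (w j) *
                  Complex.exp ((2*(Real.pi:ℂ)*Complex.I*(l:ℂ)*(j:ℂ))/(M:ℂ))) *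
                (starRingEnd ℂ) (∑ j ∈ Finset.range M, (starRingEnd ℂ) (w j) *
                  Complex.exp ((2*(Real.pi:ℂ)*Complex.I*(l:ℂ)*(j:ℂ))/(M:ℂ))) := by
              refine Finset.sum_congr rfl fun l _ => ?_
              rw [← hconjwhat l, Complex.conj_conj]
              ring
          _ = (M:ℂ) * ∑ j ∈ Finset.range M,
                (starRingEnd ℂ) (w j) * (starRingEnd ℂ) ((starRingEnd ℂ) (w j)) := hP
          _ = (M:ℂ) * ∑ j ∈ Finset.range M, w j * (starRingEnd ℂ) (w j) := by
              congr 1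
              refine Finset.sum_congr rfl fun j _ => ?_
              rw [Complex.conj_conj]; ring
      -- Step D : the first nonlinear phase
      have stepD : ∑ j ∈ Finset.range M, w j * (starRingEnd ℂ) (w j)
          = ∑ j ∈ Finset.range M, u j * (starRingEnd ℂ) (u j) := by
        refine Finset.sum_congr rfl fun j _ => ?_
        rw [← key_normsq, ← key_normsq]
        exact_mod_cast hwu j
      rw [stepA, stepB, stepC, stepD]
      field_simp
    have : ∑ j ∈ Finset.range M, (‖z j‖^2 : ℝ) = ∑ j ∈ Finset.range M, (‖w j‖^2 : ℝ) := by
      have := hCC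
      push_cast at this
      exact_mod_cast this
    exact this
  calc ∑ j ∈ Finset.range M, ‖v j‖^2
      = ∑ j ∈ Finset.range M, ‖z j‖^2 := Finset.sum_congr rfl fun j _ => hvz j
    _ = ∑ j ∈ Finset.range M, ‖w j‖^2 := middle
    _ = ∑ j ∈ Finset.range M, ‖u j‖^2 := Finset.sum_congr rfl fun j _ => hwu j
end
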